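/- Let A ∈ ℝ^{3×3} be symmetric positive definite and R ∈ SO(3). Then ψ(AR) = 0 if and only if R = I₃ or R = R_α(π, v) for some unit eigenvector v of A, where ψ(C) = vex((C-Cᵀ)/2) and R_α(π,v) = I₃ + 2([v]×)². -/

import Mathlib

open Matrix

def hat (x : Fin 3 → ℝ) : Matrix (Fin 3) (Fin 3) ℝ :=
  !![0, -x 2, x 1; x 2, 0, -x 0; -x 1, x 0, 0]

noncomputable def psi (C : Matrix (Fin 3) (Fin 3) ℝ) : Fin 3 → ℝ :=
  ![(C 2 1 - C 1 2) / 2, (C 0 2 - C 2 0) / 2, (C 1 0 - C 0 1) / 2]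

lemma invol_struct (R : Matrix (Fin 3) (Fin 3) ℝ) (hR2 : R * R = 1) (hdet : R.det = 1) :
    R = 1 ∨ R 0 0 + R 1 1 + R 2 2 = -1 := by
  have q00 : R 0 0 * R 0 0 + R 0 1 * R 1 0 + R 0 2 * R 2 0 = 1 := by
    have := congrFun (congrFun hR2 0) 0
    rw [Matrix.mul_apply, Fin.sum_univ_three] at this
    simpa using this
  have q01 : R 0 0 * R 0 1 + R 0 1 * R 1 1 + R 0 2 * R 2 1 = 0 := by
    have := congrFun (congrFun hR2 0) 1
    rw [Matrix.mul_apply, Fin.sum_univ_three] at this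
    simpa using this
  have q02 : R 0 0 * R 0 2 + R 0 1 * R 1 2 + R 0 2 * R 2 2 = 0 := by
    have := congrFun (congrFun hR2 0) 2
    rw [Matrix.mul_apply, Fin.sum_univ_three] at this
    simpa using this
  have q10 : R 1 0 * R 0 0 + R 1 1 * R 1 0 + R 1 2 * R 2 0 = 0 := by
    have := congrFun (congrFun hR2 1) 0
    rw [Matrix.mul_apply, Fin.sum_univ_three] at this
    simpa using this
  have q11 : R 1 0 * R 0 1 + R 1 1 * R 1 1 + R 1 2 * R 2 1 = 1 := by
    have := congrFun (congrFun hR2 1) 1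
    rw [Matrix.mul_apply, Fin.sum_univ_three] at this
    simpa using this
  have q12 : R 1 0 * R 0 2 + R 1 1 * R 1 2 + R 1 2 * R 2 2 = 0 := by
    have := congrFun (congrFun hR2 1) 2
    rw [Matrix.mul_apply, Fin.sum_univ_three] at this
    simpa using this
  have q20 : R 2 0 * R 0 0 + R 2 1 * R 1 0 + R 2 2 * R 2 0 = 0 := by
    have := congrFun (congrFun hR2 2) 0
    rw [Matrix.mul_apply, Fin.sum_univ_three] at this
    simpa using this
  have q21 : R 2 0 * R 0 1 + R 2 1 * R 1 1 + R 2 2 * R 2 1 = 0 := by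
    have := congrFun (congrFun hR2 2) 1
    rw [Matrix.mul_apply, Fin.sum_univ_three] at this
    simpa using this
  have q22 : R 2 0 * R 0 2 + R 2 1 * R 1 2 + R 2 2 * R 2 2 = 1 := by
    have := congrFun (congrFun hR2 2) 2
    rw [Matrix.mul_apply, Fin.sum_univ_three] at this
    simpa using this
  have hd : R 0 0 * R 1 1 * R 2 2 - R 0 0 * R 1 2 * R 2 1 - R 0 1 * R 1 0 * R 2 2
      + R 0 1 * R 1 2 * R 2 0 + R 0 2 * R 1 0 * R 2 1 - R 0 2 * R 1 1 * R 2 0 = 1 := by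
    rw [Matrix.det_fin_three] at hdet; linarith
  set t : ℝ := R 0 0 + R 1 1 + R 2 2 with ht
  set s : ℝ := (R 0 0 * R 1 1 - R 0 1 * R 1 0) + (R 0 0 * R 2 2 - R 0 2 * R 2 0)
      + (R 1 1 * R 2 2 - R 1 2 * R 2 1) with hs
  have h900 : (1 + s) * R 0 0 = t + 1 := by
    linear_combination (t - R 0 0) * q00 + (- R 0 1) * q10 + (- R 0 2) * q20 + hd
  have h901 : (1 + s) * R 0 1 = 0 := by
    linear_combination (t - R 0 0) * q01 + (- R 0 1) * q11 + (- R 0 2) * q21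
  have h902 : (1 + s) * R 0 2 = 0 := by
    linear_combination (t - R 0 0) * q02 + (- R 0 1) * q12 + (- R 0 2) * q22
  have h910 : (1 + s) * R 1 0 = 0 := by
    linear_combination (- R 1 0) * q00 + (t - R 1 1) * q10 + (- R 1 2) * q20
  have h911 : (1 + s) * R 1 1 = t + 1 := by
    linear_combination (- R 1 0) * q01 + (t - R 1 1) * q11 + (- R 1 2) * q21 + hd
  have h912 : (1 + s) * R 1 2 = 0 := by
    linear_combination (- R 1 0) * q02 + (t - R 1 1) * q12 + (- R 1 2) * q22
  have h920 : (1 + s) * R 2 0 = 0 := by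
    linear_combination (- R 2 0) * q00 + (- R 2 1) * q10 + (t - R 2 2) * q20
  have h921 : (1 + s) * R 2 1 = 0 := by
    linear_combination (- R 2 0) * q01 + (- R 2 1) * q11 + (t - R 2 2) * q21
  have h922 : (1 + s) * R 2 2 = t + 1 := by
    linear_combination (- R 2 0) * q02 + (- R 2 1) * q12 + (t - R 2 2) * q22 + hd
  by_cases hs1 : (1 + s) = 0
  · right
    rw [hs1] at h900
    simp at h900
    linarith
  · left
    have o01 : R 0 1 = 0 := (mul_eq_zero.mp h901).resolve_left hs1
    have o02 : R 0 2 = 0 := (mul_eq_zero.mp h902).resolve_left hs1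
    have o10 : R 1 0 = 0 := (mul_eq_zero.mp h910).resolve_left hs1
    have o12 : R 1 2 = 0 := (mul_eq_zero.mp h912).resolve_left hs1
    have o20 : R 2 0 = 0 := (mul_eq_zero.mp h920).resolve_left hs1
    have o21 : R 2 1 = 0 := (mul_eq_zero.mp h921).resolve_left hs1
    have d1 : R 1 1 = R 0 0 := mul_left_cancel₀ hs1 (h911.trans h900.symm)
    have d2 : R 2 2 = R 0 0 := mul_left_cancel₀ hs1 (h922.trans h900.symm)
    have hc2 : R 0 0 * R 0 0 = 1 := by
      rw [o01, o02] at q00; linarith [q00]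
    have hc3 : R 0 0 * R 0 0 * R 0 0 = 1 := by
      rw [o01, o02, o10, o12, o20, o21, d1, d2] at hd; linear_combination hd
    have hc1 : R 0 0 = 1 := by linear_combination hc3 - R 0 0 * hc2
    have e00 : R 0 0 = (1:Matrix (Fin 3) (Fin 3) ℝ) 0 0 := by rw [hc1]; simp
    have e11 : R 1 1 = (1:Matrix (Fin 3) (Fin 3) ℝ) 1 1 := by rw [d1, hc1]; simp
    have e22 : R 2 2 = (1:Matrix (Fin 3) (Fin 3) ℝ) 2 2 := by rw [d2, hc1]; simp
    have e01 : R 0 1 = (1:Matrix (Fin 3) (Fin 3) ℝ) 0 1 := by rw [o01]; simp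
    have e02 : R 0 2 = (1:Matrix (Fin 3) (Fin 3) ℝ) 0 2 := by rw [o02]; simp
    have e10 : R 1 0 = (1:Matrix (Fin 3) (Fin 3) ℝ) 1 0 := by rw [o10]; simp
    have e12 : R 1 2 = (1:Matrix (Fin 3) (Fin 3) ℝ) 1 2 := by rw [o12]; simp
    have e20 : R 2 0 = (1:Matrix (Fin 3) (Fin 3) ℝ) 2 0 := by rw [o20]; simp
    have e21 : R 2 1 = (1:Matrix (Fin 3) (Fin 3) ℝ) 2 1 := by rw [o21]; simp
    ext i j
    fin_cases i <;> fin_cases j <;>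
      [exact e00; exact e01; exact e02; exact e10; exact e11; exact e12;
       exact e20; exact e21; exact e22]


lemma sqrt_triple (a b c p q r : ℝ) (ha : 0 ≤ a) (hb : 0 ≤ b) (hc : 0 ≤ c)
    (hsum : a + b + c = 1) (hp : p^2 = a*b) (hq : q^2 = b*c) (hr : r^2 = a*c)
    (h1 : r*q = p*c) (h2 : p*q = r*b) (h3 : p*r = q*a) :
    ∃ x y z : ℝ, x^2 = a ∧ y^2 = b ∧ z^2 = c ∧ x*y = p ∧ x*z = r ∧ y*z = q := by
  rcases lt_or_eq_of_le ha with ha' | ha'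
  · have hx2 : Real.sqrt a ^ 2 = a := Real.sq_sqrt ha
    have hxx : Real.sqrt a * Real.sqrt a = a := Real.mul_self_sqrt ha
    have hxpos : 0 < Real.sqrt a := Real.sqrt_pos.mpr ha'
    have hane : a ≠ 0 := ne_of_gt ha'
    have hxne : Real.sqrt a ≠ 0 := ne_of_gt hxpos
    refine ⟨Real.sqrt a, p / Real.sqrt a, r / Real.sqrt a, hx2, ?_, ?_, ?_, ?_, ?_⟩
    · rw [div_pow, hx2, hp, mul_comm, mul_div_assoc, div_self hane, mul_one]
    · rw [div_pow, hx2, hr, mul_comm, mul_div_assoc, div_self hane, mul_one]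
    · rw [mul_comm, div_mul_cancel₀ _ hxne]
    · rw [mul_comm, div_mul_cancel₀ _ hxne]
    · rw [div_mul_div_comm, h3, hxx, mul_div_assoc, div_self hane, mul_one]
  · have ha0 : a = 0 := ha'.symm
    have hp0 : p = 0 := by nlinarith [sq_nonneg p]
    have hr0 : r = 0 := by nlinarith [sq_nonneg r]
    rcases lt_or_eq_of_le hb with hb' | hb'
    · have hy2 : Real.sqrt b ^ 2 = b := Real.sq_sqrt hb
      have hbne : b ≠ 0 := ne_of_gt hb'
      have hyne : Real.sqrt b ≠ 0 := ne_of_gt (Real.sqrt_pos.mpr hb')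
      refine ⟨0, Real.sqrt b, q / Real.sqrt b, by simp [ha0], hy2, ?_, by simp [hp0], by simp [hr0], ?_⟩
      · rw [div_pow, hy2, hq, mul_comm, mul_div_assoc, div_self hbne, mul_one]
      · rw [mul_comm, div_mul_cancel₀ _ hyne]
    · have hb0 : b = 0 := hb'.symm
      have hq0 : q = 0 := by nlinarith [sq_nonneg q]
      exact ⟨0, 0, Real.sqrt c, by simp [ha0], by simp [hb0], Real.sq_sqrt hc,
        by simp [hp0], by simp [hr0], by simp [hq0]⟩

lemma rank1_aux (a b c p q r : ℝ)
  (e1 : a = a^2 + p^2 + r^2) (e2 : b = b^2 + p^2 + q^2) (e3 : c = c^2 + q^2 + r^2)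
  (f1 : a*p + p*b + r*q = p) (f2 : a*r + p*q + r*c = r) (f3 : p*r + b*q + q*c = q)
  (ht : a + b + c = 1) : p^2 = a*b := by
  have h3 : p*r = q*a := by linear_combination f3 - q * ht
  have h2' : p*q = r*b := by linear_combination f2 - r * ht
  have key : a*b - p^2 = (a*b - p^2)^2 := by
    linear_combination (p^2+b^2+q^2)*e1 + a*e2 + (p + (a*p+p*b+r*q))*f1 + (p*r - q*a)*h3 + (p*q - r*b)*h2'
  have ha : 0 ≤ a := by nlinarith [sq_nonneg a, sq_nonneg p, sq_nonneg r]
  have hb : 0 ≤ b := by nlinarith [sq_nonneg b, sq_nonneg p, sq_nonneg q]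
  have hc : 0 ≤ c := by nlinarith [sq_nonneg c, sq_nonneg q, sq_nonneg r]
  nlinarith [key, sq_nonneg (a-b), sq_nonneg p, sq_nonneg (a*b - p^2)]

set_option maxHeartbeats 1000000 in
lemma refl_struct (R : Matrix (Fin 3) (Fin 3) ℝ) (hR2 : R * R = 1) (hRsymm : Rᵀ = R)
    (htr : R 0 0 + R 1 1 + R 2 2 = -1) :
    ∃ v : Fin 3 → ℝ, v ⬝ᵥ v = 1 ∧
      (∀ i j, R i j = 2 * (v i * v j) - (if i = j then (1:ℝ) else 0)) := by
  have s01 : R 1 0 = R 0 1 := congrFun (congrFun hRsymm 0) 1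
  have s02 : R 2 0 = R 0 2 := congrFun (congrFun hRsymm 0) 2
  have s12 : R 2 1 = R 1 2 := congrFun (congrFun hRsymm 1) 2
  have q00 : R 0 0 * R 0 0 + R 0 1 * R 1 0 + R 0 2 * R 2 0 = 1 := by
    have := congrFun (congrFun hR2 0) 0
    rw [Matrix.mul_apply, Fin.sum_univ_three] at this
    simpa using this
  have q01 : R 0 0 * R 0 1 + R 0 1 * R 1 1 + R 0 2 * R 2 1 = 0 := by
    have := congrFun (congrFun hR2 0) 1
    rw [Matrix.mul_apply, Fin.sum_univ_three] at this
    simpa using this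
  have q02 : R 0 0 * R 0 2 + R 0 1 * R 1 2 + R 0 2 * R 2 2 = 0 := by
    have := congrFun (congrFun hR2 0) 2
    rw [Matrix.mul_apply, Fin.sum_univ_three] at this
    simpa using this
  have q10 : R 1 0 * R 0 0 + R 1 1 * R 1 0 + R 1 2 * R 2 0 = 0 := by
    have := congrFun (congrFun hR2 1) 0
    rw [Matrix.mul_apply, Fin.sum_univ_three] at this
    simpa using this
  have q11 : R 1 0 * R 0 1 + R 1 1 * R 1 1 + R 1 2 * R 2 1 = 1 := by
    have := congrFun (congrFun hR2 1) 1
    rw [Matrix.mul_apply, Fin.sum_univ_three] at this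
    simpa using this
  have q12 : R 1 0 * R 0 2 + R 1 1 * R 1 2 + R 1 2 * R 2 2 = 0 := by
    have := congrFun (congrFun hR2 1) 2
    rw [Matrix.mul_apply, Fin.sum_univ_three] at this
    simpa using this
  have q20 : R 2 0 * R 0 0 + R 2 1 * R 1 0 + R 2 2 * R 2 0 = 0 := by
    have := congrFun (congrFun hR2 2) 0
    rw [Matrix.mul_apply, Fin.sum_univ_three] at this
    simpa using this
  have q21 : R 2 0 * R 0 1 + R 2 1 * R 1 1 + R 2 2 * R 2 1 = 0 := by
    have := congrFun (congrFun hR2 2) 1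
    rw [Matrix.mul_apply, Fin.sum_univ_three] at this
    simpa using this
  have q22 : R 2 0 * R 0 2 + R 2 1 * R 1 2 + R 2 2 * R 2 2 = 1 := by
    have := congrFun (congrFun hR2 2) 2
    rw [Matrix.mul_apply, Fin.sum_univ_three] at this
    simpa using this
  set a : ℝ := (R 0 0 + 1)/2 with hadef
  set b : ℝ := (R 1 1 + 1)/2 with hbdef
  set c : ℝ := (R 2 2 + 1)/2 with hcdef
  set p : ℝ := R 0 1 / 2 with hpdef
  set q : ℝ := R 1 2 / 2 with hqdef
  set r : ℝ := R 0 2 / 2 with hrdef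
  have e1 : a = a^2 + p^2 + r^2 := by
    linear_combination (-1/4)*q00 + ((R 0 1)/4)*s01 + ((R 0 2)/4)*s02
  have e2 : b = b^2 + p^2 + q^2 := by
    linear_combination (-1/4)*q11 + ((R 0 1)/4)*s01 + ((R 1 2)/4)*s12
  have e3 : c = c^2 + q^2 + r^2 := by
    linear_combination (-1/4)*q22 + ((R 0 2)/4)*s02 + ((R 1 2)/4)*s12
  have f1 : a*p + p*b + r*q = p := by
    linear_combination (1/4)*q01 - ((R 0 2)/4)*s12
  have f2 : a*r + p*q + r*c = r := by
    linear_combination (1/4)*q02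
  have f3 : p*r + b*q + q*c = q := by
    linear_combination (1/4)*q12 - ((R 0 2)/4)*s01
  have hsum : a + b + c = 1 := by
    rw [hadef, hbdef, hcdef]; linarith
  have ha : 0 ≤ a := by rw [e1]; positivity
  have hb : 0 ≤ b := by rw [e2]; positivity
  have hc : 0 ≤ c := by rw [e3]; positivity
  have hp : p^2 = a*b := rank1_aux a b c p q r e1 e2 e3 f1 f2 f3 hsum
  have hq : q^2 = b*c := by
    refine rank1_aux b c a q r p (by linear_combination e2) (by linear_combination e3)
      (by linear_combination e1) (by linear_combination f3) (by linear_combination f1)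
      (by linear_combination f2) (by linarith)
  have hr : r^2 = a*c := by
    have := rank1_aux c a b r p q (by linear_combination e3) (by linear_combination e1)
      (by linear_combination e2) (by linear_combination f2) (by linear_combination f3)
      (by linear_combination f1) (by linarith)
    linear_combination this
  have hst1 : r*q = p*c := by linear_combination f1 - p*hsum
  have hst2 : p*q = r*b := by linear_combination f2 - r*hsum
  have hst3 : p*r = q*a := by linear_combination f3 - q*hsum
  obtain ⟨x, y, z, hx2, hy2, hz2, hxy, hxz, hyz⟩ :=
    sqrt_triple a b c p q r ha hb hc hsum hp hq hr hst1 hst2 hst3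
  refine ⟨![x, y, z], ?_, ?_⟩
  · have hd : ![x,y,z] ⬝ᵥ ![x,y,z] = x*x + y*y + z*z := by
      simp [dotProduct, Fin.sum_univ_three]
    rw [hd]
    linear_combination hx2 + hy2 + hz2 + hsum
  · have g00 : R 0 0 = 2*(x*x) - 1 := by linear_combination -2*hx2 - 2*hadef
    have g01 : R 0 1 = 2*(x*y) - 0 := by linear_combination -2*hxy - 2*hpdef
    have g02 : R 0 2 = 2*(x*z) - 0 := by linear_combination -2*hxz - 2*hrdef
    have g10 : R 1 0 = 2*(y*x) - 0 := by linear_combination s01 - 2*hxy - 2*hpdef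
    have g11 : R 1 1 = 2*(y*y) - 1 := by linear_combination -2*hy2 - 2*hbdef
    have g12 : R 1 2 = 2*(y*z) - 0 := by linear_combination -2*hyz - 2*hqdef
    have g20 : R 2 0 = 2*(z*x) - 0 := by linear_combination s02 - 2*hxz - 2*hrdef
    have g21 : R 2 1 = 2*(z*y) - 0 := by linear_combination s12 - 2*hyz - 2*hqdef
    have g22 : R 2 2 = 2*(z*z) - 1 := by linear_combination -2*hz2 - 2*hcdef
    intro i j
    fin_cases i <;> fin_cases j <;>
      [exact g00; exact g01; exact g02; exact g10; exact g11; exact g12;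
       exact g20; exact g21; exact g22]

lemma RR_one (A R : Matrix (Fin 3) (Fin 3) ℝ)
    (hA : A.PosDef) (hAsymm : Aᵀ = A)
    (hR : Rᵀ * R = 1) (hdet : R.det = 1)
    (hSsymm : (A * R)ᵀ = A * R) : R * R = 1 := by
  have hRRt : R * Rᵀ = 1 := mul_eq_one_comm.mp hR
  have hRA : Rᵀ * A = A * R := by
    calc Rᵀ * A = Rᵀ * Aᵀ := by rw [hAsymm]
    _ = (A * R)ᵀ := (transpose_mul A R).symm
    _ = A * R := hSsymm
  have hRAR : R * (A * R) = A := by rw [← hRA, ← mul_assoc, hRRt, one_mul]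
  set Q : Matrix (Fin 3) (Fin 3) ℝ := R * R with hQdef
  have hQorth : Qᵀ * Q = 1 := by
    rw [hQdef, transpose_mul, mul_assoc, ← mul_assoc Rᵀ R, hR, one_mul, hR]
  have htr : (A * Q).trace = A.trace := by
    rw [hQdef, ← mul_assoc, trace_mul_comm, hRAR]
  set P : Matrix (Fin 3) (Fin 3) ℝ := 1 - (2⁻¹ : ℝ) • (Q + Qᵀ) with hPdef
  have hQQ : ∀ x : Fin 3 → ℝ, (Q *ᵥ x) ⬝ᵥ (Q *ᵥ x) = x ⬝ᵥ x := by
    intro x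
    rw [dotProduct_mulVec, ← mulVec_transpose, mulVec_mulVec, hQorth, one_mulVec]
  have hPT : Pᵀ = P := by
    rw [hPdef, transpose_sub, transpose_smul, transpose_add, transpose_transpose,
      transpose_one, add_comm]
  have hPx : ∀ x : Fin 3 → ℝ, x ⬝ᵥ (P *ᵥ x) = 2⁻¹ * ((x - Q *ᵥ x) ⬝ᵥ (x - Q *ᵥ x)) := by
    intro x
    have hq : x ⬝ᵥ (Qᵀ *ᵥ x) = x ⬝ᵥ (Q *ᵥ x) := by
      rw [mulVec_transpose, dotProduct_mulVec, dotProduct_comm]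
    have h2 := hQQ x
    have h3 : (Q *ᵥ x) ⬝ᵥ x = x ⬝ᵥ (Q *ᵥ x) := dotProduct_comm _ _
    simp only [hPdef, sub_mulVec, smul_mulVec, add_mulVec, one_mulVec,
      dotProduct_sub, dotProduct_smul, dotProduct_add, smul_eq_mul, hq,
      sub_dotProduct]
    linarith
  have hPsd : P.PosSemidef := by
    refine posSemidef_iff_dotProduct_mulVec.mpr ⟨?_, fun x => ?_⟩
    · show Pᴴ = P
      rw [conjTranspose_eq_transpose_of_trivial]; exact hPT
    · show (0:ℝ) ≤ star x ⬝ᵥ (P *ᵥ x)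
      have h1 : star x = x := rfl
      rw [h1, hPx x]
      have : (0:ℝ) ≤ (x - Q *ᵥ x) ⬝ᵥ (x - Q *ᵥ x) :=
        Finset.sum_nonneg fun i _ => mul_self_nonneg _
      linarith
  -- trace of A*P is zero
  have htrAQt : (A * Qᵀ).trace = (A * Q).trace := by
    rw [← trace_transpose (A * Qᵀ), transpose_mul, transpose_transpose, hAsymm,
      trace_mul_comm]
  have htrP : (A * P).trace = 0 := by
    rw [hPdef, mul_sub, mul_one, Matrix.mul_smul, mul_add, trace_sub, trace_smul, trace_add,
      htrAQt, htr]
    rw [smul_eq_mul]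
    ring
  -- P = 0
  have hP0 : P = 0 := by
    obtain ⟨B, hB⟩ : ∃ B : Matrix (Fin 3) (Fin 3) ℝ, P = Bᴴ * B := by
      open scoped MatrixOrder in
      obtain ⟨X, hX, -, hXX⟩ := CFC.exists_sqrt_of_isSelfAdjoint_of_quasispectrumRestricts
        hPsd.isHermitian (QuasispectrumRestricts.nnreal_of_nonneg hPsd.nonneg)
      exact ⟨X, by show P = star X * X; rw [hX.star_eq]; exact hXX.symm⟩
    have hBT : Bᴴ = Bᵀ := by ext i j; simp [conjTranspose_apply]
    rw [hBT] at hB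
    have htrB : (B * A * Bᵀ).trace = 0 := by
      rw [Matrix.mul_assoc, trace_mul_comm, Matrix.mul_assoc, ← hB, htrP]
    have hdiag : ∀ i, (B * A * Bᵀ) i i = (fun j => B i j) ⬝ᵥ (A *ᵥ fun j => B i j) := by
      intro i
      simp only [Matrix.mul_apply, dotProduct, mulVec, dotProduct, transpose_apply,
        Finset.mul_sum, Finset.sum_mul]
      rw [Finset.sum_comm]
      exact Finset.sum_congr rfl fun j _ => Finset.sum_congr rfl fun k _ => by ring
    have hnn : ∀ i : Fin 3, 0 ≤ (B * A * Bᵀ) i i := by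
      intro i
      rw [hdiag i]
      by_cases hz : (fun j => B i j) = 0
      · rw [hz]; simp
      · exact le_of_lt (hA.dotProduct_mulVec_pos hz)
    have hsum : ∑ i : Fin 3, (B * A * Bᵀ) i i = 0 := htrB
    have hzero : ∀ i : Fin 3, (B * A * Bᵀ) i i = 0 := by
      intro i
      have := (Finset.sum_eq_zero_iff_of_nonneg (fun i _ => hnn i)).mp hsum
      exact this i (Finset.mem_univ i)
    have hBrow : ∀ i : Fin 3, (fun j => B i j) = 0 := by
      intro i
      by_contra hz
      exact absurd (hzero i) (by rw [hdiag i]; exact ne_of_gt (hA.dotProduct_mulVec_pos hz))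
    have hB0 : B = 0 := by
      ext i j
      exact congrFun (hBrow i) j
    rw [hB, hB0]
    simp
  have hQ1 : Q = 1 := by
    have h0 := hP0
    rw [hPdef, sub_eq_zero] at h0
    have hsum2 : Q + Qᵀ = 1 + 1 := by
      ext i j
      have h3 := congrFun (congrFun h0 i) j
      simp only [Matrix.smul_apply, Matrix.add_apply, smul_eq_mul] at h3
      simp only [Matrix.add_apply]
      linarith
    have hQt : Qᵀ = 1 + 1 - Q := by rw [← hsum2]; abel
    have h1 : (1 + 1 - Q) * Q = 1 := by rw [← hQt]; exact hQorth
    have hK : (Q - 1) * (Q - 1) = 0 := by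
      calc (Q - 1) * (Q - 1) = -((1 + 1 - Q) * Q) + Q * Q - Q * Q + 1 := by noncomm_ring
      _ = 0 := by rw [h1]; abel
    have hKe : ∀ i j, (Q - 1) j i = -((Q - 1) i j) := by
      intro i j
      have := congrFun (congrFun hQt j) i
      simp only [Matrix.sub_apply, Matrix.add_apply, Matrix.one_apply] at this ⊢
      by_cases hij : i = j
      · subst hij; simp at this ⊢; linarith
      · have hji : ¬ (j = i) := fun h => hij h.symm
        simp [hij, hji] at this ⊢
        linarith
    have hKzero : ∀ i j, (Q - 1) i j = 0 := by
      intro i j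
      have hd : ((Q - 1) * (Q - 1)) i i = 0 := by rw [hK]; simp
      rw [Matrix.mul_apply, Fin.sum_univ_three] at hd
      rw [hKe i 0, hKe i 1, hKe i 2] at hd
      have h00 : (Q-1) i 0 = 0 ∧ (Q-1) i 1 = 0 ∧ (Q-1) i 2 = 0 := by
        refine ⟨?_, ?_, ?_⟩ <;>
          nlinarith [sq_nonneg ((Q-1) i 0), sq_nonneg ((Q-1) i 1), sq_nonneg ((Q-1) i 2)]
      fin_cases j
      · exact h00.1
      · exact h00.2.1
      · exact h00.2.2
    have : Q - 1 = 0 := by ext i j; exact hKzero i j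
    exact sub_eq_zero.mp this
  exact hQ1


set_option maxHeartbeats 1000000 in
theorem stmt14 (A R : Matrix (Fin 3) (Fin 3) ℝ)
    (hA : A.PosDef) (hAsymm : Aᵀ = A)
    (hR : Rᵀ * R = 1) (hdet : R.det = 1) :
    psi (A * R) = 0 ↔
      (R = 1 ∨ ∃ (v : Fin 3 → ℝ) (lam : ℝ), v ⬝ᵥ v = 1 ∧ A *ᵥ v = lam • v ∧
        R = (1 : Matrix (Fin 3) (Fin 3) ℝ) + (2 : ℝ) • (hat v * hat v)) := by
  have sA10 : A 1 0 = A 0 1 := congrFun (congrFun hAsymm 0) 1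
  have sA20 : A 2 0 = A 0 2 := congrFun (congrFun hAsymm 0) 2
  have sA21 : A 2 1 = A 1 2 := congrFun (congrFun hAsymm 1) 2
  constructor
  · intro hpsi
    have hp0 : ((A*R) 2 1 - (A*R) 1 2)/2 = 0 := congrFun hpsi 0
    have hp1 : ((A*R) 0 2 - (A*R) 2 0)/2 = 0 := congrFun hpsi 1
    have hp2 : ((A*R) 1 0 - (A*R) 0 1)/2 = 0 := congrFun hpsi 2
    have e21 : (A*R) 2 1 = (A*R) 1 2 := by linarith
    have e02 : (A*R) 0 2 = (A*R) 2 0 := by linarith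
    have e10 : (A*R) 1 0 = (A*R) 0 1 := by linarith
    have hSsymm : (A * R)ᵀ = A * R := by
      ext i j
      fin_cases i <;> fin_cases j <;>
        [rfl; exact e10; exact e02.symm; exact e10.symm; rfl; exact e21; exact e02; exact e21.symm; rfl]
    have hR2 : R * R = 1 := RR_one A R hA hAsymm hR hdet hSsymm
    have hRsymm : Rᵀ = R := by
      calc Rᵀ = Rᵀ * (R * R) := by rw [hR2, mul_one]
      _ = (Rᵀ * R) * R := by rw [mul_assoc]
      _ = R := by rw [hR, one_mul]
    rcases invol_struct R hR2 hdet with h1 | htm1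
    · exact Or.inl h1
    · right
      obtain ⟨v, hv, hRent⟩ := refl_struct R hR2 hRsymm htm1
      have hv3 : v 0 * v 0 + v 1 * v 1 + v 2 * v 2 = 1 := by
        have := hv
        rwa [dotProduct, Fin.sum_univ_three] at this
      -- entries of R with ifs evaluated
      have er00 : R 0 0 = 2*(v 0 * v 0) - 1 := by have := hRent 0 0; simpa using this
      have er01 : R 0 1 = 2*(v 0 * v 1) := by have := hRent 0 1; simpa using this
      have er02 : R 0 2 = 2*(v 0 * v 2) := by have := hRent 0 2; simpa using this
      have er10 : R 1 0 = 2*(v 1 * v 0) := by have := hRent 1 0; simpa using this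
      have er11 : R 1 1 = 2*(v 1 * v 1) - 1 := by have := hRent 1 1; simpa using this
      have er12 : R 1 2 = 2*(v 1 * v 2) := by have := hRent 1 2; simpa using this
      have er20 : R 2 0 = 2*(v 2 * v 0) := by have := hRent 2 0; simpa using this
      have er21 : R 2 1 = 2*(v 2 * v 1) := by have := hRent 2 1; simpa using this
      have er22 : R 2 2 = 2*(v 2 * v 2) - 1 := by have := hRent 2 2; simpa using this
      -- A commutes with R
      have hComm : A * R = R * A := by
        have h1 : A * R = Rᵀ * A := by
          rw [← hSsymm, transpose_mul, hAsymm]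
        rw [h1, hRsymm]
      have E01 := congrFun (congrFun hComm 0) 1
      have E02 := congrFun (congrFun hComm 0) 2
      have E12 := congrFun (congrFun hComm 1) 2
      rw [Matrix.mul_apply, Matrix.mul_apply, Fin.sum_univ_three, Fin.sum_univ_three] at E01 E02 E12
      -- w facts
      have w0 : (A *ᵥ v) 0 = A 0 0 * v 0 + A 0 1 * v 1 + A 0 2 * v 2 := by
        rw [mulVec, dotProduct, Fin.sum_univ_three]
      have w1 : (A *ᵥ v) 1 = A 1 0 * v 0 + A 1 1 * v 1 + A 1 2 * v 2 := by
        rw [mulVec, dotProduct, Fin.sum_univ_three]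
      have w2 : (A *ᵥ v) 2 = A 2 0 * v 0 + A 2 1 * v 1 + A 2 2 * v 2 := by
        rw [mulVec, dotProduct, Fin.sum_univ_three]
      have hw01 : (A *ᵥ v) 0 * v 1 = v 0 * (A *ᵥ v) 1 := by
        rw [w0, w1]
        rw [er01, er11, er21, er00, er02] at E01
        linear_combination (1/2) * E01 + (v 0 * v 2) * sA21 - v 0 ^ 2 * sA10
      have hw02 : (A *ᵥ v) 0 * v 2 = v 0 * (A *ᵥ v) 2 := by
        rw [w0, w2]
        rw [er02, er12, er22, er00, er01] at E02
        linear_combination (1/2) * E02 - (v 0 * v 1) * sA21 - v 0 ^ 2 * sA20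
      have hw12 : (A *ᵥ v) 1 * v 2 = v 1 * (A *ᵥ v) 2 := by
        rw [w1, w2]
        rw [er02, er12, er22, er10, er11] at E12
        linear_combination (1/2) * E12 - v 1 ^ 2 * sA21 - (v 0 * v 1) * sA20
      set lam : ℝ := (A *ᵥ v) 0 * v 0 + (A *ᵥ v) 1 * v 1 + (A *ᵥ v) 2 * v 2 with hlam
      have gv0 : (A *ᵥ v) 0 = lam * v 0 := by
        rw [hlam]; linear_combination (-((A *ᵥ v) 0)) * hv3 + v 1 * hw01 + v 2 * hw02
      have gv1 : (A *ᵥ v) 1 = lam * v 1 := by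
        rw [hlam]; linear_combination (-((A *ᵥ v) 1)) * hv3 - v 0 * hw01 + v 2 * hw12
      have gv2 : (A *ᵥ v) 2 = lam * v 2 := by
        rw [hlam]; linear_combination (-((A *ᵥ v) 2)) * hv3 - v 0 * hw02 - v 1 * hw12
      refine ⟨v, lam, hv, ?_, ?_⟩
      · funext i
        fin_cases i
        · exact gv0
        · exact gv1
        · exact gv2
      · have hh : ∀ i j, ((1 : Matrix (Fin 3) (Fin 3) ℝ) + (2:ℝ) • (hat v * hat v)) i j
            = 2 * (v i * v j) - (if i = j then (1:ℝ) else 0) := by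
          intro i j
          rw [Matrix.add_apply, Matrix.smul_apply, Matrix.mul_apply, Fin.sum_univ_three,
            Matrix.one_apply, smul_eq_mul]
          fin_cases i <;> fin_cases j <;> simp [hat] <;> first | ring1 | linear_combination -2 * hv3
        ext i j
        rw [hRent i j, hh i j]
  · intro h
    rcases h with h1 | ⟨v, lam, hv, hAv, hRform⟩
    · rw [h1, mul_one]
      funext k
      fin_cases k
      · show (A 2 1 - A 1 2)/2 = 0
        rw [sA21]; ring
      · show (A 0 2 - A 2 0)/2 = 0
        rw [sA20]; ring
      · show (A 1 0 - A 0 1)/2 = 0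
        rw [sA10]; ring
    · have hv3 : v 0 * v 0 + v 1 * v 1 + v 2 * v 2 = 1 := by
        have := hv
        rwa [dotProduct, Fin.sum_univ_three] at this
      have hAv0 : A 0 0 * v 0 + A 0 1 * v 1 + A 0 2 * v 2 = lam * v 0 := by
        have := congrFun hAv 0
        rwa [mulVec, dotProduct, Fin.sum_univ_three] at this
      have hAv1 : A 1 0 * v 0 + A 1 1 * v 1 + A 1 2 * v 2 = lam * v 1 := by
        have := congrFun hAv 1
        rwa [mulVec, dotProduct, Fin.sum_univ_three] at this
      have hAv2 : A 2 0 * v 0 + A 2 1 * v 1 + A 2 2 * v 2 = lam * v 2 := by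
        have := congrFun hAv 2
        rwa [mulVec, dotProduct, Fin.sum_univ_three] at this
      have hRe : ∀ i j, R i j = 2 * (v i * v j) - (if i = j then (1:ℝ) else 0) := by
        intro i j
        rw [hRform, Matrix.add_apply, Matrix.smul_apply, Matrix.mul_apply, Fin.sum_univ_three,
          Matrix.one_apply, smul_eq_mul]
        fin_cases i <;> fin_cases j <;> simp [hat] <;> first | ring1 | linear_combination -2 * hv3
      have er00 : R 0 0 = 2*(v 0 * v 0) - 1 := by have := hRe 0 0; simpa using this
      have er01 : R 0 1 = 2*(v 0 * v 1) := by have := hRe 0 1; simpa using this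
      have er02 : R 0 2 = 2*(v 0 * v 2) := by have := hRe 0 2; simpa using this
      have er10 : R 1 0 = 2*(v 1 * v 0) := by have := hRe 1 0; simpa using this
      have er11 : R 1 1 = 2*(v 1 * v 1) - 1 := by have := hRe 1 1; simpa using this
      have er12 : R 1 2 = 2*(v 1 * v 2) := by have := hRe 1 2; simpa using this
      have er20 : R 2 0 = 2*(v 2 * v 0) := by have := hRe 2 0; simpa using this
      have er21 : R 2 1 = 2*(v 2 * v 1) := by have := hRe 2 1; simpa using this
      have er22 : R 2 2 = 2*(v 2 * v 2) - 1 := by have := hRe 2 2; simpa using this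
      have hARe : ∀ i j : Fin 3, (A * R) i j
          = A i 0 * R 0 j + A i 1 * R 1 j + A i 2 * R 2 j := by
        intro i j
        rw [Matrix.mul_apply, Fin.sum_univ_three]
      funext k
      fin_cases k
      · show ((A * R) 2 1 - (A * R) 1 2)/2 = 0
        rw [hARe, hARe, er01, er11, er21, er02, er12, er22]
        linear_combination (v 1 * hAv2 - v 2 * hAv1) - (1/2) * sA21
      · show ((A * R) 0 2 - (A * R) 2 0)/2 = 0
        rw [hARe, hARe, er02, er12, er22, er00, er10, er20]
        linear_combination (v 2 * hAv0 - v 0 * hAv2) + (1/2) * sA20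
      · show ((A * R) 1 0 - (A * R) 0 1)/2 = 0
        rw [hARe, hARe, er00, er10, er20, er01, er11, er21]
        linear_combination (v 0 * hAv1 - v 1 * hAv0) - (1/2) * sA10
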